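/- arXiv:math/0606267 — 2 statements merged into one kernel-verified Lean document; each statement's English description precedes it below -/
import Mathlib

section
/- Let k be a field of characteristic 2 and let a, b be elements of the formal power series ring k[[u,v]]. Set x = u² + a·u, y = v² + b·v, and z = u·b + v·a. If a and b both lie in the ideal (x, y) of k[[u,v]], then the ideal (x, y, z) of k[[u,v]] equals the ideal (u², v²). (This identifies the schematic fiber of the quotient map of Artin's wild involution over the singular point: its ideal is the Frobenius power of the maximal ideal.) -/
/-- Let `k` be a field of characteristic 2 and `a, b ∈ k[[u,v]]`.
Set `x = u² + a·u`, `y = v² + b·v`, `z = u·b + v·a`.  If `a` and `b` lie in the ideal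
`(x, y)`, then `(x, y, z) = (u², v²)` as ideals of `k[[u,v]]`.
Here `u = X 0` and `v = X 1` in `MvPowerSeries (Fin 2) k`. -/
theorem fiber_ideal_eq_frobenius_power
    {k : Type*} [Field k] [CharP k 2]
    (a b x y z : MvPowerSeries (Fin 2) k)
    (hx : x = MvPowerSeries.X 0 ^ 2 + a * MvPowerSeries.X 0)
    (hy : y = MvPowerSeries.X 1 ^ 2 + b * MvPowerSeries.X 1)
    (hz : z = MvPowerSeries.X 0 * b + MvPowerSeries.X 1 * a)
    (ha : a ∈ Ideal.span {x, y})
    (hb : b ∈ Ideal.span {x, y}) :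
    Ideal.span {x, y, z} =
      Ideal.span {(MvPowerSeries.X 0 : MvPowerSeries (Fin 2) k) ^ 2,
        MvPowerSeries.X 1 ^ 2} := by
  set U : MvPowerSeries (Fin 2) k := MvPowerSeries.X 0 with hU
  set V : MvPowerSeries (Fin 2) k := MvPowerSeries.X 1 with hV
  have h2 : (2 : MvPowerSeries (Fin 2) k) = 0 := by
    have hk : (2 : k) = 0 := by exact_mod_cast CharP.cast_eq_zero k 2
    rw [← map_ofNat (MvPowerSeries.C (σ := Fin 2) (R := k)) 2, hk, map_zero]
  obtain ⟨p, q, hpq⟩ := Ideal.mem_span_pair.mp ha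
  obtain ⟨r, s, hrs⟩ := Ideal.mem_span_pair.mp hb
  set J : Ideal (MvPowerSeries (Fin 2) k) := Ideal.span {U ^ 2, V ^ 2} with hJ
  have hUJ : U ^ 2 ∈ J := Ideal.subset_span (by simp)
  have hVJ : V ^ 2 ∈ J := Ideal.subset_span (by simp)
  have e1 : (1 + p * U) * a + q * V * b = p * U ^ 2 + q * V ^ 2 := by
    rw [hx, hy] at hpq
    linear_combination -hpq + (p * a * U + q * b * V) * h2
  have e2 : r * U * a + (1 + s * V) * b = r * U ^ 2 + s * V ^ 2 := by
    rw [hx, hy] at hrs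
    linear_combination -hrs + (r * a * U + s * b * V) * h2
  have he1 : (1 + p * U) * a + q * V * b ∈ J := by
    rw [e1]; exact add_mem (Ideal.mul_mem_left _ _ hUJ) (Ideal.mul_mem_left _ _ hVJ)
  have he2 : r * U * a + (1 + s * V) * b ∈ J := by
    rw [e2]; exact add_mem (Ideal.mul_mem_left _ _ hUJ) (Ideal.mul_mem_left _ _ hVJ)
  set d : MvPowerSeries (Fin 2) k := (1 + p * U) * (1 + s * V) + q * V * (r * U) with hd
  have hda : d * a ∈ J := by
    have heq : d * a = (1 + s * V) * ((1 + p * U) * a + q * V * b)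
        + q * V * (r * U * a + (1 + s * V) * b)
        - ((1 + s * V) * q * V * b) * 2 := by rw [hd]; ring
    rw [heq, h2, mul_zero, sub_zero]
    exact add_mem (Ideal.mul_mem_left _ _ he1) (Ideal.mul_mem_left _ _ he2)
  have hdb : d * b ∈ J := by
    have heq : d * b = r * U * ((1 + p * U) * a + q * V * b)
        + (1 + p * U) * (r * U * a + (1 + s * V) * b)
        - (r * U * (1 + p * U) * a) * 2 := by rw [hd]; ring
    rw [heq, h2, mul_zero, sub_zero]
    exact add_mem (Ideal.mul_mem_left _ _ he1) (Ideal.mul_mem_left _ _ he2)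
  have hdu : IsUnit d := by
    rw [MvPowerSeries.isUnit_iff_constantCoeff]
    have : MvPowerSeries.constantCoeff (σ := Fin 2) (R := k) d = 1 := by
      simp [hd, hU, hV, map_add, map_mul, map_one, MvPowerSeries.constantCoeff_X]
    rw [this]; exact isUnit_one
  obtain ⟨e, he⟩ := hdu.exists_left_inv
  have haJ : a ∈ J := by
    have : a = e * (d * a) := by rw [← mul_assoc, he, one_mul]
    rw [this]; exact Ideal.mul_mem_left _ _ hda
  have hbJ : b ∈ J := by
    have : b = e * (d * b) := by rw [← mul_assoc, he, one_mul]
    rw [this]; exact Ideal.mul_mem_left _ _ hdb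
  apply le_antisymm
  · rw [Ideal.span_le]
    rintro w hw
    simp only [Set.mem_insert_iff, Set.mem_singleton_iff] at hw
    rcases hw with rfl | rfl | rfl
    · rw [hx]; exact add_mem hUJ (Ideal.mul_mem_right _ _ haJ)
    · rw [hy]; exact add_mem hVJ (Ideal.mul_mem_right _ _ hbJ)
    · rw [hz]
      exact add_mem (Ideal.mul_mem_left _ _ hbJ) (Ideal.mul_mem_left _ _ haJ)
  · rw [Ideal.span_le]
    have hxI : x ∈ Ideal.span {x, y, z} := Ideal.subset_span (by simp)
    have hyI : y ∈ Ideal.span {x, y, z} := Ideal.subset_span (by simp)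
    have haI : a ∈ Ideal.span {x, y, z} := by
      rw [← hpq]; exact add_mem (Ideal.mul_mem_left _ _ hxI) (Ideal.mul_mem_left _ _ hyI)
    have hbI : b ∈ Ideal.span {x, y, z} := by
      rw [← hrs]; exact add_mem (Ideal.mul_mem_left _ _ hxI) (Ideal.mul_mem_left _ _ hyI)
    rintro w hw
    simp only [Set.mem_insert_iff, Set.mem_singleton_iff] at hw
    rcases hw with rfl | rfl
    · have hU2 : U ^ 2 = x + a * U := by
        linear_combination -hx - a * U * h2
      rw [hU2]; exact add_mem hxI (Ideal.mul_mem_right _ _ haI)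
    · have hV2 : V ^ 2 = y + b * V := by
        linear_combination -hy - b * V * h2
      rw [hV2]; exact add_mem hyI (Ideal.mul_mem_right _ _ hbI)
end

section
/- Let k be a field of characteristic 2. Let A, B ∈ k[[X,Y]] be formal power series with zero constant term such that the ideal (A, B) is primary for the maximal ideal (X, Y) (i.e., A, B form a system of parameters of k[[X,Y]]). Suppose x, y ∈ k[[u,v]] have zero constant term and satisfy x = u² + a·u and y = v² + b·v, where a = A(x,y) and b = B(x,y) are obtained by substitution; set z = u·b + v·a. Let T ⊆ k[[u,v]] be the image of the continuous substitution homomorphism k[[X,Y,Z]] → k[[u,v]] sending X ↦ x, Y ↦ y, Z ↦ z. Then the contracted ideal T ∩ (a, b)·k[[u,v]] equals the ideal (a, b, z)·T of T. (This computes the ideal of the schematic image of the fixed scheme of Artin's wild involution under the quotient map.) -/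
namespace ArtinWild

open MvPowerSeries

variable {k : Type*} [Field k] {N : ℕ}

/-- total degree (weight) of an exponent vector -/
def wdeg (d : Fin N →₀ ℕ) : ℕ := d.sum fun _ n => n

lemma wdeg_add (p q : Fin N →₀ ℕ) : wdeg (p + q) = wdeg p + wdeg q := by
  simpa [wdeg] using Finsupp.sum_add_index' (h := fun _ n => n) (fun _ => rfl) (fun _ _ _ => rfl)

lemma apply_le_wdeg (d : Fin N →₀ ℕ) (i : Fin N) : d i ≤ wdeg d := by
  by_cases h : d i = 0
  · simp [h]
  · exact Finset.single_le_sum (f := fun j => d j) (fun _ _ => Nat.zero_le _)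
      (Finsupp.mem_support_iff.2 h)

lemma wdeg_eq_zero {d : Fin N →₀ ℕ} (h : wdeg d = 0) : d = 0 := by
  ext i
  simp only [Finsupp.coe_zero, Pi.zero_apply]
  have := apply_le_wdeg d i
  omega

lemma wdeg_single (i : Fin N) (n : ℕ) : wdeg (Finsupp.single i n) = n := by
  simp [wdeg, Finsupp.sum_single_index]

/-- The ideal of power series of order at least `n`. -/
def J (N : ℕ) (k : Type*) [Field k] (n : ℕ) : Ideal (MvPowerSeries (Fin N) k) where
  carrier := {f | ∀ d, wdeg d < n → coeff d f = 0}
  add_mem' := fun hf hg d hd => by rw [map_add, hf d hd, hg d hd, add_zero]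
  zero_mem' := fun d _ => by rw [map_zero]
  smul_mem' := by
    classical
    intro c f hf d hd
    rw [smul_eq_mul, coeff_mul]
    apply Finset.sum_eq_zero
    rintro ⟨p, q⟩ hpq
    rw [Finset.HasAntidiagonal.mem_antidiagonal] at hpq
    have hq : wdeg q < n := by
      have := wdeg_add p q
      rw [hpq] at this
      omega
    rw [hf q hq, mul_zero]

lemma mem_J {n : ℕ} {f : MvPowerSeries (Fin N) k} :
    f ∈ J N k n ↔ ∀ d, wdeg d < n → coeff d f = 0 := Iff.rfl

lemma J_antitone {n m : ℕ} (h : n ≤ m) : J N k m ≤ J N k n :=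
  fun _ hf d hd => hf d (lt_of_lt_of_le hd h)

lemma J_mul {a b : ℕ} {f g : MvPowerSeries (Fin N) k} (hf : f ∈ J N k a) (hg : g ∈ J N k b) :
    f * g ∈ J N k (a + b) := by
  classical
  intro d hd
  rw [coeff_mul]
  apply Finset.sum_eq_zero
  rintro ⟨p, q⟩ hpq
  rw [Finset.HasAntidiagonal.mem_antidiagonal] at hpq
  have hw : wdeg p + wdeg q = wdeg d := by rw [← wdeg_add, hpq]
  by_cases hp : wdeg p < a
  · rw [hf p hp, zero_mul]
  · rw [hg q (by omega), mul_zero]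

lemma J_pow {a : ℕ} {f : MvPowerSeries (Fin N) k} (hf : f ∈ J N k a) (s : ℕ) :
    f ^ s ∈ J N k (s * a) := by
  induction s with
  | zero => intro d hd; omega
  | succ m ih =>
    rw [pow_succ, Nat.succ_mul]
    exact J_mul ih hf

lemma X_mem_J1 (i : Fin N) : (X i : MvPowerSeries (Fin N) k) ∈ J N k 1 := by
  intro d hd
  have hd0 : d = 0 := wdeg_eq_zero (by omega)
  subst hd0
  classical
  rw [MvPowerSeries.coeff_zero_X]

lemma constantCoeff_mem_J1 {f : MvPowerSeries (Fin N) k}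
    (h : constantCoeff f = 0) : f ∈ J N k 1 := by
  intro d hd
  have hd0 : d = 0 := wdeg_eq_zero (by omega)
  subst hd0
  rwa [← coeff_zero_eq_constantCoeff] at h

/-- separation -/
lemma eq_zero_of_mem_J {f : MvPowerSeries (Fin N) k} (h : ∀ n, f ∈ J N k n) : f = 0 := by
  apply MvPowerSeries.ext
  intro d
  rw [map_zero]
  exact h (wdeg d + 1) d (by omega)

lemma span_pow_le_J (n : ℕ) :
    (Ideal.span (Set.range (X : Fin N → MvPowerSeries (Fin N) k))) ^ n ≤ J N k n := by
  induction n with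
  | zero => intro f _ d hd; omega
  | succ m ih =>
    rw [pow_succ]
    apply Ideal.mul_le.2
    intro r hr s hs
    rw [show m + 1 = m + 1 from rfl]
    apply J_mul (ih hr)
    refine Ideal.span_le.2 ?_ hs
    rintro _ ⟨i, rfl⟩
    exact X_mem_J1 i


lemma coeff_X_mul' (i : Fin N) (g : MvPowerSeries (Fin N) k) (d : Fin N →₀ ℕ) :
    coeff d (X i * g) =
      if Finsupp.single i 1 ≤ d then coeff (d - Finsupp.single i 1) g else 0 := by
  classical
  rw [X_def, coeff_monomial_mul]
  split_ifs <;> simp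

lemma J_le_span_pow (n : ℕ) :
    J N k n ≤ (Ideal.span (Set.range (X : Fin N → MvPowerSeries (Fin N) k))) ^ n := by
  induction n with
  | zero => intro f _; simp [Ideal.one_eq_top]
  | succ m ih =>
    intro f hf
    classical
    -- define the pieces
    set g : Fin N → MvPowerSeries (Fin N) k := fun i d =>
      if ∀ j, j < i → d j = 0 then coeff (d + Finsupp.single i 1) f else 0 with hg
    have hgcoeff : ∀ i d, coeff d (g i) =
        if ∀ j, j < i → d j = 0 then coeff (d + Finsupp.single i 1) f else 0 := fun i d => rfl
    have hgJ : ∀ i, g i ∈ J N k m := by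
      intro i d hd
      rw [hgcoeff]
      split_ifs with h
      · apply hf
        rw [wdeg_add, wdeg_single]
        omega
      · rfl
    have hsum : f = ∑ i, X i * g i := by
      apply MvPowerSeries.ext
      intro d
      rw [map_sum]
      by_cases hd0 : d = 0
      · subst hd0
        rw [hf 0 (by simp [wdeg])]
        symm
        apply Finset.sum_eq_zero
        intro i _
        rw [coeff_X_mul', if_neg]
        intro hle
        rw [Finsupp.single_le_iff] at hle
        simp at hle
      · -- minimal index with d j ≠ 0
        have hne : (Finset.univ.filter (fun j => d j ≠ 0)).Nonempty := by
          rw [Finset.filter_nonempty_iff]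
          by_contra hc
          push_neg at hc
          apply hd0
          ext j
          simpa using hc j (Finset.mem_univ j)
        set i₀ := (Finset.univ.filter (fun j => d j ≠ 0)).min' hne with hi₀
        have hi₀mem := (Finset.univ.filter (fun j => d j ≠ 0)).min'_mem hne
        rw [Finset.mem_filter] at hi₀mem
        have hd_i₀ : d i₀ ≠ 0 := hi₀mem.2
        have hmin : ∀ j, j < i₀ → d j = 0 := by
          intro j hj
          by_contra hjne
          have : i₀ ≤ j := Finset.min'_le (Finset.univ.filter (fun j => d j ≠ 0)) j (Finset.mem_filter.2 ⟨Finset.mem_univ _, hjne⟩)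
          exact absurd hj (not_lt.2 this)
        have hsle : (Finsupp.single i₀ 1 : Fin N →₀ ℕ) ≤ d :=
          Finsupp.single_le_iff.2 (Nat.one_le_iff_ne_zero.2 hd_i₀)
        rw [Finset.sum_eq_single i₀]
        · have hcond : ∀ j, j < i₀ → (d - Finsupp.single i₀ 1 : Fin N →₀ ℕ) j = 0 := by
            intro j hj
            rw [Finsupp.tsub_apply, hmin j hj]
            simp
          rw [coeff_X_mul', if_pos hsle, hgcoeff, if_pos hcond, tsub_add_cancel_of_le hsle]
        · intro i _ hne'
          rw [coeff_X_mul']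
          split_ifs with hle
          · rw [hgcoeff, if_neg]
            intro hall
            have hdi : d i ≠ 0 := by
              have := Finsupp.single_le_iff.1 hle
              omega
            have h1 : i₀ ≤ i := Finset.min'_le (Finset.univ.filter (fun j => d j ≠ 0)) i
              (Finset.mem_filter.2 ⟨Finset.mem_univ _, hdi⟩)
            have h2 : ¬ i₀ < i := by
              intro hlt
              have := hall i₀ hlt
              rw [Finsupp.tsub_apply] at this
              have hsing : (Finsupp.single i 1 : Fin N →₀ ℕ) i₀ = 0 := by
                rw [Finsupp.single_apply, if_neg]
                intro h; exact hne' (by rw [h])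
              omega
            exact hne' (le_antisymm (not_lt.1 h2) h1)
          · rfl
        · intro hni
          exact absurd (Finset.mem_univ i₀) hni
    rw [hsum]
    apply Ideal.sum_mem
    intro i _
    rw [pow_succ']
    exact Ideal.mul_mem_mul (Ideal.subset_span ⟨i, rfl⟩) (ih (hgJ i))

/-! ### Truncation polynomials -/

/-- exponents of weight `< n` -/
noncomputable def degSet (N n : ℕ) : Finset (Fin N →₀ ℕ) :=
  (Finset.Iic (Finsupp.equivFunOnFinite.symm fun _ => n)).filter (fun d => wdeg d < n)

lemma mem_degSet {n : ℕ} {d : Fin N →₀ ℕ} : d ∈ degSet N n ↔ wdeg d < n := by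
  rw [degSet, Finset.mem_filter, Finset.mem_Iic]
  constructor
  · exact fun h => h.2
  · intro h
    refine ⟨?_, h⟩
    intro i
    have := apply_le_wdeg d i
    simpa using (by omega : d i ≤ n)

lemma degSet_mono {n m : ℕ} (h : n ≤ m) : degSet N n ⊆ degSet N m := by
  intro d hd
  rw [mem_degSet] at *
  omega

/-- truncation of a power series to a polynomial of total degree `< n` -/
noncomputable def truncP (n : ℕ) (f : MvPowerSeries (Fin N) k) : MvPolynomial (Fin N) k :=
  ∑ d ∈ degSet N n, MvPolynomial.monomial d (coeff d f)

lemma coeff_truncP (n : ℕ) (f : MvPowerSeries (Fin N) k) (e : Fin N →₀ ℕ) :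
    MvPolynomial.coeff e (truncP n f) = if wdeg e < n then coeff e f else 0 := by
  classical
  rw [truncP, MvPolynomial.coeff_sum]
  simp only [MvPolynomial.coeff_monomial]
  rw [Finset.sum_ite_eq' (degSet N n) e (fun d => coeff d f)]
  simp only [mem_degSet]

lemma coeff_truncP_coe (n : ℕ) (f : MvPowerSeries (Fin N) k) (e : Fin N →₀ ℕ) :
    coeff e ((truncP n f : MvPolynomial (Fin N) k) : MvPowerSeries (Fin N) k) =
      if wdeg e < n then coeff e f else 0 := by
  rw [MvPolynomial.coeff_coe, coeff_truncP]

lemma sub_truncP_mem_J (n : ℕ) (f : MvPowerSeries (Fin N) k) :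
    f - (truncP n f : MvPolynomial (Fin N) k) ∈ J N k n := by
  intro d hd
  rw [map_sub, coeff_truncP_coe, if_pos hd, sub_self]

/-- an algebra hom out of the power series ring evaluates polynomials like `aeval`. -/
lemma algHom_coe_eq_aeval {Rt : Type*} [CommRing Rt] [Algebra k Rt]
    (χ : MvPowerSeries (Fin N) k →ₐ[k] Rt) (P : MvPolynomial (Fin N) k) :
    χ ((P : MvPowerSeries (Fin N) k)) = MvPolynomial.aeval (fun i => χ (X i)) P := by
  have : χ.comp ((MvPolynomial.coeToMvPowerSeries.algHom k).restrictScalars k)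
      = MvPolynomial.aeval (fun i => χ (X i)) := by
    apply MvPolynomial.algHom_ext
    intro i
    simp [MvPolynomial.coeToMvPowerSeries.algHom_apply]
  calc χ ((P : MvPowerSeries (Fin N) k))
      = (χ.comp ((MvPolynomial.coeToMvPowerSeries.algHom k).restrictScalars k)) P := by
        simp [MvPolynomial.coeToMvPowerSeries.algHom_apply]
    _ = MvPolynomial.aeval (fun i => χ (X i)) P := by rw [this]

/-! ### Parity machinery on two variables -/

noncomputable def half (d : Fin 2 →₀ ℕ) : Fin 2 →₀ ℕ := d.mapRange (· / 2) (by norm_num)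

def isEv (d : Fin 2 →₀ ℕ) : Prop := ∀ i, 2 ∣ d i

instance (d : Fin 2 →₀ ℕ) : Decidable (isEv d) := by unfold isEv; infer_instance

lemma half_apply (d : Fin 2 →₀ ℕ) (i : Fin 2) : half d i = d i / 2 := rfl

lemma two_smul_apply (d : Fin 2 →₀ ℕ) (i : Fin 2) : (2 • d) i = 2 * d i := by
  rw [Finsupp.smul_apply, smul_eq_mul]

lemma isEv_two_smul (d : Fin 2 →₀ ℕ) : isEv (2 • d) := by
  intro i
  rw [two_smul_apply]
  exact ⟨d i, rfl⟩

lemma half_two_smul (d : Fin 2 →₀ ℕ) : half (2 • d) = d := by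
  ext i
  rw [half_apply, two_smul_apply]
  omega

lemma two_smul_half {d : Fin 2 →₀ ℕ} (h : isEv d) : 2 • half d = d := by
  ext i
  rw [two_smul_apply, half_apply]
  have := h i
  omega

lemma two_smul_injective : Function.Injective (fun d : Fin 2 →₀ ℕ => 2 • d) := by
  intro p q h
  ext i
  have := congrArg (fun d : Fin 2 →₀ ℕ => d i) h
  simp only [two_smul_apply] at this
  omega

lemma isEv_add {p q : Fin 2 →₀ ℕ} (hp : isEv p) (hq : isEv q) : isEv (p + q) := by
  intro i
  rw [Finsupp.add_apply]
  exact dvd_add (hp i) (hq i)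

lemma wdeg_mono {p q : Fin 2 →₀ ℕ} (h : p ≤ q) : wdeg p ≤ wdeg q := by
  have : q = p + (q - p) := (add_tsub_cancel_of_le h).symm
  rw [this, wdeg_add]
  omega

lemma half_le (d : Fin 2 →₀ ℕ) : half d ≤ d := by
  rw [Finsupp.le_def]
  intro i
  rw [half_apply]
  exact Nat.div_le_self _ _

variable (k) in
/-- substitution of squares of the variables -/
noncomputable def sq (f : MvPowerSeries (Fin 2) k) : MvPowerSeries (Fin 2) k :=
  fun d => if isEv d then coeff (half d) f else 0

lemma coeff_sq (f : MvPowerSeries (Fin 2) k) (d : Fin 2 →₀ ℕ) :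
    coeff d (sq k f) = if isEv d then coeff (half d) f else 0 := rfl

lemma coeff_sq_two_smul (f : MvPowerSeries (Fin 2) k) (d : Fin 2 →₀ ℕ) :
    coeff (2 • d) (sq k f) = coeff d f := by
  rw [coeff_sq, if_pos (isEv_two_smul d), half_two_smul]

lemma sq_injective : Function.Injective (sq k) := by
  intro f g h
  apply MvPowerSeries.ext
  intro d
  rw [← coeff_sq_two_smul f d, ← coeff_sq_two_smul g d, h]

lemma sq_add (f g : MvPowerSeries (Fin 2) k) : sq k (f + g) = sq k f + sq k g := by
  apply MvPowerSeries.ext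
  intro d
  rw [map_add, coeff_sq, coeff_sq, coeff_sq, map_add]
  split_ifs <;> simp

lemma sq_sub (f g : MvPowerSeries (Fin 2) k) : sq k (f - g) = sq k f - sq k g := by
  apply MvPowerSeries.ext
  intro d
  rw [map_sub, coeff_sq, coeff_sq, coeff_sq, map_sub]
  split_ifs <;> simp

lemma sq_mul (f g : MvPowerSeries (Fin 2) k) : sq k (f * g) = sq k f * sq k g := by
  classical
  apply MvPowerSeries.ext
  intro e
  by_cases he : isEv e
  · obtain ⟨e', rfl⟩ : ∃ e', e = 2 • e' := ⟨half e, (two_smul_half he).symm⟩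
    rw [coeff_sq_two_smul, coeff_mul, coeff_mul]
    have hsub : (Finset.HasAntidiagonal.antidiagonal e').image (fun P : (Fin 2 →₀ ℕ) × (Fin 2 →₀ ℕ) =>
        (2 • P.1, 2 • P.2)) ⊆ Finset.HasAntidiagonal.antidiagonal (2 • e') := by
      intro P hP
      rw [Finset.mem_image] at hP
      obtain ⟨Q, hQ, rfl⟩ := hP
      rw [Finset.HasAntidiagonal.mem_antidiagonal] at hQ ⊢
      rw [← smul_add, hQ]
    rw [← Finset.sum_subset hsub ?van]
    case van =>
      rintro ⟨p, q⟩ hmem hnot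
      rw [Finset.HasAntidiagonal.mem_antidiagonal] at hmem
      by_cases hp : isEv p
      · by_cases hq : isEv q
        · exfalso
          apply hnot
          rw [Finset.mem_image]
          refine ⟨(half p, half q), ?_, ?_⟩
          · rw [Finset.HasAntidiagonal.mem_antidiagonal]
            apply two_smul_injective
            simp only [smul_add]
            rw [two_smul_half hp, two_smul_half hq, hmem]
          · simp only [two_smul_half hp, two_smul_half hq]
        · rw [show coeff q (sq k g) = 0 from if_neg hq, mul_zero]
      · rw [show coeff p (sq k f) = 0 from if_neg hp, zero_mul]
    rw [Finset.sum_image (fun P _ Q _ h => ?inj)]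
    case inj =>
      have h1 := congrArg Prod.fst h
      have h2 := congrArg Prod.snd h
      simp only at h1 h2
      exact Prod.ext (two_smul_injective h1) (two_smul_injective h2)
    apply Finset.sum_congr rfl
    rintro ⟨p, q⟩ _
    rw [coeff_sq_two_smul, coeff_sq_two_smul]
  · rw [show coeff e (sq k (f * g)) = 0 from if_neg he, coeff_mul]
    symm
    apply Finset.sum_eq_zero
    rintro ⟨p, q⟩ hpq
    rw [Finset.HasAntidiagonal.mem_antidiagonal] at hpq
    by_cases hp : isEv p
    · by_cases hq : isEv q
      · exact absurd (hpq ▸ isEv_add hp hq) he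
      · rw [show coeff q (sq k g) = 0 from if_neg hq, mul_zero]
    · rw [show coeff p (sq k f) = 0 from if_neg hp, zero_mul]

lemma half_zero : half (0 : Fin 2 →₀ ℕ) = 0 := by
  ext i; rw [half_apply]; simp

lemma isEv_zero : isEv (0 : Fin 2 →₀ ℕ) := fun i => by simp

lemma eq_zero_of_half {d : Fin 2 →₀ ℕ} (h1 : isEv d) (h2 : half d = 0) : d = 0 := by
  rw [← two_smul_half h1, h2, smul_zero]

lemma sq_one : sq k 1 = 1 := by
  classical
  apply MvPowerSeries.ext
  intro d
  rw [coeff_sq, coeff_one]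
  by_cases h1 : isEv d
  · rw [if_pos h1, coeff_one]
    by_cases h2 : half d = 0
    · rw [if_pos h2, if_pos (eq_zero_of_half h1 h2)]
    · rw [if_neg h2, if_neg (fun hc => h2 (by rw [hc, half_zero]))]
  · rw [if_neg h1, coeff_one,
      if_neg (show ¬ d = 0 from fun hc => h1 (by rw [hc]; exact isEv_zero))]

lemma sq_C (r : k) : sq k ((MvPowerSeries.C) r) = (MvPowerSeries.C) r := by
  classical
  apply MvPowerSeries.ext
  intro d
  rw [coeff_sq, coeff_C]
  by_cases h1 : isEv d
  · rw [if_pos h1, coeff_C]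
    by_cases h2 : half d = 0
    · rw [if_pos h2, if_pos (eq_zero_of_half h1 h2)]
    · rw [if_neg h2, if_neg (fun hc => h2 (by rw [hc, half_zero]))]
  · rw [if_neg h1, coeff_C,
      if_neg (show ¬ d = 0 from fun hc => h1 (by rw [hc]; exact isEv_zero))]

lemma sq_mem_J {f : MvPowerSeries (Fin 2) k} {n : ℕ} (h : f ∈ J 2 k n) : sq k f ∈ J 2 k n := by
  intro d hd
  rw [coeff_sq]
  split_ifs with h1
  · exact h _ (lt_of_le_of_lt (wdeg_mono (half_le d)) hd)
  · rfl

variable (k) in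
/-- `sq` as an algebra homomorphism -/
noncomputable def sqHom : MvPowerSeries (Fin 2) k →ₐ[k] MvPowerSeries (Fin 2) k where
  toFun := sq k
  map_one' := sq_one
  map_mul' := sq_mul
  map_zero' := by
    apply MvPowerSeries.ext; intro d; rw [coeff_sq]; split_ifs <;> simp
  map_add' := sq_add
  commutes' := fun r => by
    rw [← MvPowerSeries.c_eq_algebraMap]
    exact sq_C r

lemma sqHom_apply (f : MvPowerSeries (Fin 2) k) : sqHom k f = sq k f := rfl

lemma sq_X (i : Fin 2) : sq k (X i) = (X i : MvPowerSeries (Fin 2) k) ^ 2 := by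
  classical
  rw [X_pow_eq]
  apply MvPowerSeries.ext
  intro d
  rw [coeff_sq, coeff_monomial]
  have key : (isEv d ∧ half d = Finsupp.single i 1) ↔ d = Finsupp.single i 2 := by
    constructor
    · rintro ⟨h1, h2⟩
      rw [← two_smul_half h1, h2, Finsupp.smul_single]
      norm_num
    · rintro rfl
      constructor
      · intro j
        rw [Finsupp.single_apply]
        split_ifs <;> norm_num
      · ext j
        rw [half_apply, Finsupp.single_apply, Finsupp.single_apply]
        split_ifs <;> norm_num
  by_cases h1 : isEv d
  · rw [if_pos h1, coeff_X]
    by_cases h2 : half d = Finsupp.single i 1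
    · rw [if_pos h2, if_pos (key.1 ⟨h1, h2⟩)]
    · rw [if_neg h2, if_neg (fun hc => h2 (key.2 hc).2)]
  · rw [if_neg h1, if_neg (fun hc => h1 (key.2 hc).1)]

/-! ### even part -/

variable (k) in
noncomputable def Halve (g : MvPowerSeries (Fin 2) k) : MvPowerSeries (Fin 2) k :=
  fun d => coeff (2 • d) g

lemma coeff_Halve (g : MvPowerSeries (Fin 2) k) (d : Fin 2 →₀ ℕ) :
    coeff d (Halve k g) = coeff (2 • d) g := rfl

variable (k) in
/-- projection to the part with all exponents even -/
noncomputable def ev (g : MvPowerSeries (Fin 2) k) : MvPowerSeries (Fin 2) k := sq k (Halve k g)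

lemma coeff_ev (g : MvPowerSeries (Fin 2) k) (e : Fin 2 →₀ ℕ) :
    coeff e (ev k g) = if isEv e then coeff e g else 0 := by
  rw [ev, coeff_sq]
  split_ifs with h
  · rw [coeff_Halve, two_smul_half h]
  · rfl

lemma ev_add (f g : MvPowerSeries (Fin 2) k) : ev k (f + g) = ev k f + ev k g := by
  apply MvPowerSeries.ext
  intro e
  rw [map_add, coeff_ev, coeff_ev, coeff_ev, map_add]
  split_ifs <;> simp

lemma ev_sub (f g : MvPowerSeries (Fin 2) k) : ev k (f - g) = ev k f - ev k g := by
  apply MvPowerSeries.ext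
  intro e
  rw [map_sub, coeff_ev, coeff_ev, coeff_ev, map_sub]
  split_ifs <;> simp

lemma Halve_sq (f : MvPowerSeries (Fin 2) k) : Halve k (sq k f) = f := by
  apply MvPowerSeries.ext
  intro d
  rw [coeff_Halve, coeff_sq_two_smul]

lemma ev_sq (f : MvPowerSeries (Fin 2) k) : ev k (sq k f) = sq k f := by
  rw [ev, Halve_sq]

lemma ev_sq_mul (f g : MvPowerSeries (Fin 2) k) : ev k (sq k f * g) = sq k f * ev k g := by
  classical
  apply MvPowerSeries.ext
  intro e
  rw [coeff_ev]
  split_ifs with he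
  · rw [coeff_mul, coeff_mul]
    apply Finset.sum_congr rfl
    rintro ⟨p, q⟩ hpq
    rw [Finset.HasAntidiagonal.mem_antidiagonal] at hpq
    by_cases hp : isEv p
    · have hq : isEv q := by
        intro i
        have h1 := he i
        have h2 := hp i
        have h3 : p i + q i = e i := by rw [← Finsupp.add_apply, hpq]
        omega
      rw [coeff_ev, if_pos hq]
    · rw [show coeff p (sq k f) = 0 from if_neg hp, zero_mul, zero_mul]
  · rw [coeff_mul]
    symm
    apply Finset.sum_eq_zero
    rintro ⟨p, q⟩ hpq
    rw [Finset.HasAntidiagonal.mem_antidiagonal] at hpq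
    by_cases hp : isEv p
    · have hq : ¬ isEv q := by
        intro hq
        exact he (hpq ▸ isEv_add hp hq)
      rw [coeff_ev, if_neg hq, mul_zero]
    · rw [show coeff p (sq k f) = 0 from if_neg hp, zero_mul]

/-! ### the key comparison between substitution and squaring -/

lemma smul_mem_ideal {c : k} {f : MvPowerSeries (Fin 2) k} {I : Ideal (MvPowerSeries (Fin 2) k)}
    (hf : f ∈ I) : c • f ∈ I := by
  rw [Algebra.smul_def]
  exact I.mul_mem_left _ hf

lemma wdeg_fin2 (d : Fin 2 →₀ ℕ) : wdeg d = d 0 + d 1 := by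
  rw [wdeg, Finsupp.sum_fintype _ _ (fun _ => rfl), Fin.sum_univ_two]

variable (k) in
lemma span_range_eq2 :
    Ideal.span (Set.range (X : Fin 2 → MvPowerSeries (Fin 2) k)) =
      Ideal.span {(X 0 : MvPowerSeries (Fin 2) k), X 1} := by
  congr 1
  ext f
  constructor
  · rintro ⟨i, rfl⟩
    fin_cases i
    · exact Or.inl rfl
    · exact Or.inr rfl
  · rintro (rfl | rfl)
    · exact ⟨0, rfl⟩
    · exact ⟨1, rfl⟩

variable (k) in
lemma span_range_eq3 :
    Ideal.span (Set.range (X : Fin 3 → MvPowerSeries (Fin 3) k)) =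
      Ideal.span {(X 0 : MvPowerSeries (Fin 3) k), X 1, X 2} := by
  congr 1
  ext f
  constructor
  · rintro ⟨i, rfl⟩
    fin_cases i
    · exact Or.inl rfl
    · exact Or.inr (Or.inl rfl)
    · exact Or.inr (Or.inr rfl)
  · rintro (rfl | rfl | rfl)
    · exact ⟨0, rfl⟩
    · exact ⟨1, rfl⟩
    · exact ⟨2, rfl⟩

/-- geometric-sum correction factors attached to a monomial -/
noncomputable def Cmon (x y : MvPowerSeries (Fin 2) k) (d : Fin 2 →₀ ℕ) :
    MvPowerSeries (Fin 2) k :=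
  (∑ s ∈ Finset.range (d 0), x ^ s * ((X 0 : MvPowerSeries (Fin 2) k) ^ 2) ^ (d 0 - 1 - s)) *
    y ^ (d 1)

noncomputable def Dmon (y : MvPowerSeries (Fin 2) k) (d : Fin 2 →₀ ℕ) :
    MvPowerSeries (Fin 2) k :=
  ((X 0 : MvPowerSeries (Fin 2) k) ^ 2) ^ (d 0) *
    (∑ s ∈ Finset.range (d 1), y ^ s * ((X 1 : MvPowerSeries (Fin 2) k) ^ 2) ^ (d 1 - 1 - s))

lemma monomial_diff {x y a b : MvPowerSeries (Fin 2) k}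
    (hx : x = X 0 ^ 2 + a * X 0) (hy : y = X 1 ^ 2 + b * X 1) (d : Fin 2 →₀ ℕ) :
    x ^ (d 0) * y ^ (d 1) -
        ((X 0 : MvPowerSeries (Fin 2) k) ^ 2) ^ (d 0) * ((X 1 : MvPowerSeries (Fin 2) k) ^ 2) ^ (d 1)
      = a * X 0 * Cmon x y d + b * X 1 * Dmon y d := by
  have hxu : x - (X 0 : MvPowerSeries (Fin 2) k) ^ 2 = a * X 0 := by rw [hx]; ring
  have hyv : y - (X 1 : MvPowerSeries (Fin 2) k) ^ 2 = b * X 1 := by rw [hy]; ring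
  have h1 := geom_sum₂_mul x ((X 0 : MvPowerSeries (Fin 2) k) ^ 2) (d 0)
  have h2 := geom_sum₂_mul y ((X 1 : MvPowerSeries (Fin 2) k) ^ 2) (d 1)
  rw [hxu] at h1
  rw [hyv] at h2
  calc x ^ (d 0) * y ^ (d 1) -
        ((X 0 : MvPowerSeries (Fin 2) k) ^ 2) ^ (d 0) * ((X 1 : MvPowerSeries (Fin 2) k) ^ 2) ^ (d 1)
      = (x ^ (d 0) - ((X 0 : MvPowerSeries (Fin 2) k) ^ 2) ^ (d 0)) * y ^ (d 1)
        + ((X 0 : MvPowerSeries (Fin 2) k) ^ 2) ^ (d 0) *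
          (y ^ (d 1) - ((X 1 : MvPowerSeries (Fin 2) k) ^ 2) ^ (d 1)) := by ring
    _ = _ := by rw [← h1, ← h2, Cmon, Dmon]; ring

lemma Cmon_mem {x y : MvPowerSeries (Fin 2) k} (hx2 : x ∈ J 2 k 2) (hy2 : y ∈ J 2 k 2)
    (d : Fin 2 →₀ ℕ) : Cmon x y d ∈ J 2 k (2 * wdeg d - 2) := by
  have hu2 : ((X 0 : MvPowerSeries (Fin 2) k) ^ 2) ∈ J 2 k 2 := by
    simpa using J_pow (X_mem_J1 0) 2
  rw [Cmon]
  rw [Finset.sum_mul]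
  apply Ideal.sum_mem
  intro s hs
  rw [Finset.mem_range] at hs
  have hterm : x ^ s * ((X 0 : MvPowerSeries (Fin 2) k) ^ 2) ^ (d 0 - 1 - s) * y ^ (d 1)
      ∈ J 2 k ((s * 2 + (d 0 - 1 - s) * 2) + (d 1) * 2) :=
    J_mul (J_mul (J_pow hx2 s) (J_pow hu2 (d 0 - 1 - s))) (J_pow hy2 (d 1))
  refine J_antitone ?_ hterm
  rw [wdeg_fin2]
  omega

lemma Dmon_mem {y : MvPowerSeries (Fin 2) k} (hy2 : y ∈ J 2 k 2)
    (d : Fin 2 →₀ ℕ) : Dmon y d ∈ J 2 k (2 * wdeg d - 2) := by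
  have hu2 : ((X 0 : MvPowerSeries (Fin 2) k) ^ 2) ∈ J 2 k 2 := by
    simpa using J_pow (X_mem_J1 0) 2
  have hv2 : ((X 1 : MvPowerSeries (Fin 2) k) ^ 2) ∈ J 2 k 2 := by
    simpa using J_pow (X_mem_J1 1) 2
  rw [Dmon, Finset.mul_sum]
  apply Ideal.sum_mem
  intro s hs
  rw [Finset.mem_range] at hs
  have hterm : ((X 0 : MvPowerSeries (Fin 2) k) ^ 2) ^ (d 0) *
      (y ^ s * ((X 1 : MvPowerSeries (Fin 2) k) ^ 2) ^ (d 1 - 1 - s))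
      ∈ J 2 k ((d 0) * 2 + (s * 2 + (d 1 - 1 - s) * 2)) :=
    J_mul (J_pow hu2 (d 0)) (J_mul (J_pow hy2 s) (J_pow hv2 (d 1 - 1 - s)))
  refine J_antitone ?_ hterm
  rw [wdeg_fin2]
  omega

/-- evaluation of the truncation under an algebra endomorphism -/
lemma algHom_truncP (χ : MvPowerSeries (Fin 2) k →ₐ[k] MvPowerSeries (Fin 2) k)
    (n : ℕ) (f : MvPowerSeries (Fin 2) k) :
    χ ((truncP n f : MvPolynomial (Fin 2) k) : MvPowerSeries (Fin 2) k)
      = ∑ d ∈ degSet 2 n, coeff d f • ((χ (X 0)) ^ (d 0) * (χ (X 1)) ^ (d 1)) := by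
  rw [algHom_coe_eq_aeval, truncP, map_sum]
  apply Finset.sum_congr rfl
  intro d _
  rw [MvPolynomial.aeval_monomial, Algebra.smul_def]
  congr 1
  rw [Finsupp.prod_fintype _ _ (fun _ => pow_zero _), Fin.prod_univ_two]

/-! ### the convergent correction series -/

noncomputable def cpart (x y : MvPowerSeries (Fin 2) k) (n : ℕ) (g : MvPowerSeries (Fin 2) k) :
    MvPowerSeries (Fin 2) k :=
  ∑ d ∈ degSet 2 n, coeff d g • Cmon x y d

noncomputable def dpart (y : MvPowerSeries (Fin 2) k) (n : ℕ) (g : MvPowerSeries (Fin 2) k) :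
    MvPowerSeries (Fin 2) k :=
  ∑ d ∈ degSet 2 n, coeff d g • Dmon y d

noncomputable def cSer (x y g : MvPowerSeries (Fin 2) k) : MvPowerSeries (Fin 2) k :=
  fun e => coeff e (cpart x y (wdeg e + 2) g)

noncomputable def dSer (y g : MvPowerSeries (Fin 2) k) : MvPowerSeries (Fin 2) k :=
  fun e => coeff e (dpart y (wdeg e + 2) g)

lemma cpart_stab {x y : MvPowerSeries (Fin 2) k} (hx2 : x ∈ J 2 k 2) (hy2 : y ∈ J 2 k 2)
    (g : MvPowerSeries (Fin 2) k) {n m : ℕ} (h : n ≤ m) :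
    cpart x y m g - cpart x y n g ∈ J 2 k (2 * n - 2) := by
  have hsd := Finset.sum_sdiff (f := fun d => coeff d g • Cmon x y d) (degSet_mono (N := 2) h)
  rw [cpart, cpart, ← hsd, add_sub_cancel_right]
  apply Ideal.sum_mem
  intro d hd
  rw [Finset.mem_sdiff, mem_degSet, mem_degSet] at hd
  apply smul_mem_ideal
  refine J_antitone ?_ (Cmon_mem hx2 hy2 d)
  omega

lemma dpart_stab {y : MvPowerSeries (Fin 2) k} (hy2 : y ∈ J 2 k 2)
    (g : MvPowerSeries (Fin 2) k) {n m : ℕ} (h : n ≤ m) :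
    dpart y m g - dpart y n g ∈ J 2 k (2 * n - 2) := by
  have hsd := Finset.sum_sdiff (f := fun d => coeff d g • Dmon y d) (degSet_mono (N := 2) h)
  rw [dpart, dpart, ← hsd, add_sub_cancel_right]
  apply Ideal.sum_mem
  intro d hd
  rw [Finset.mem_sdiff, mem_degSet, mem_degSet] at hd
  apply smul_mem_ideal
  refine J_antitone ?_ (Dmon_mem hy2 d)
  omega

lemma cSer_sub_cpart {x y : MvPowerSeries (Fin 2) k} (hx2 : x ∈ J 2 k 2) (hy2 : y ∈ J 2 k 2)
    (g : MvPowerSeries (Fin 2) k) (n : ℕ) :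
    cSer x y g - cpart x y n g ∈ J 2 k (2 * n - 2) := by
  intro e he
  have hcoe : coeff e (cSer x y g) = coeff e (cpart x y (wdeg e + 2) g) := rfl
  rw [map_sub, hcoe]
  rcases le_total n (wdeg e + 2) with h | h
  · have := cpart_stab hx2 hy2 g h e he
    rw [map_sub] at this
    exact this
  · have := cpart_stab hx2 hy2 g h e (by omega)
    rw [map_sub] at this
    exact sub_eq_zero.2 (sub_eq_zero.1 this).symm

lemma dSer_sub_dpart {y : MvPowerSeries (Fin 2) k} (hy2 : y ∈ J 2 k 2)
    (g : MvPowerSeries (Fin 2) k) (n : ℕ) :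
    dSer y g - dpart y n g ∈ J 2 k (2 * n - 2) := by
  intro e he
  have hcoe : coeff e (dSer y g) = coeff e (dpart y (wdeg e + 2) g) := rfl
  rw [map_sub, hcoe]
  rcases le_total n (wdeg e + 2) with h | h
  · have := dpart_stab hy2 g h e he
    rw [map_sub] at this
    exact this
  · have := dpart_stab hy2 g h e (by omega)
    rw [map_sub] at this
    exact sub_eq_zero.2 (sub_eq_zero.1 this).symm

/-- **Key lemma**: substitution of `(x,y)` differs from substitution of squares by an
element of the ideal `(a·u, b·v)`. -/
lemma key_sub {x y a b : MvPowerSeries (Fin 2) k}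
    (ψ : MvPowerSeries (Fin 2) k →ₐ[k] MvPowerSeries (Fin 2) k)
    (hψ0 : ψ (X 0) = x) (hψ1 : ψ (X 1) = y)
    (hψJ : ∀ n (g : MvPowerSeries (Fin 2) k), g ∈ J 2 k n → ψ g ∈ J 2 k n)
    (hx : x = X 0 ^ 2 + a * X 0) (hy : y = X 1 ^ 2 + b * X 1)
    (hx2 : x ∈ J 2 k 2) (hy2 : y ∈ J 2 k 2)
    (g : MvPowerSeries (Fin 2) k) :
    ψ g = sq k g + (a * X 0 * cSer x y g + b * X 1 * dSer y g) := by
  have hmain : ∀ n, ψ g - sq k g - (a * X 0 * cSer x y g + b * X 1 * dSer y g) ∈ J 2 k n := by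
    intro n
    set M := n + 2 with hM
    set P : MvPowerSeries (Fin 2) k := ((truncP M g : MvPolynomial (Fin 2) k) :
      MvPowerSeries (Fin 2) k) with hP
    have h1 : ψ g - ψ P ∈ J 2 k M := by
      rw [← map_sub]
      exact hψJ M _ (sub_truncP_mem_J M g)
    have h2 : sq k g - sq k P ∈ J 2 k M := by
      rw [← sq_sub]
      exact sq_mem_J (sub_truncP_mem_J M g)
    have h3 : ψ P = ∑ d ∈ degSet 2 M, coeff d g • (x ^ (d 0) * y ^ (d 1)) := by
      rw [hP, algHom_truncP, hψ0, hψ1]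
    have h4 : sq k P = ∑ d ∈ degSet 2 M,
        coeff d g • (((X 0 : MvPowerSeries (Fin 2) k) ^ 2) ^ (d 0) *
          ((X 1 : MvPowerSeries (Fin 2) k) ^ 2) ^ (d 1)) := by
      have := algHom_truncP (sqHom k) M g
      rw [sqHom_apply] at this
      rw [hP, this, sqHom_apply, sqHom_apply, sq_X, sq_X]
    have h5 : ψ P - sq k P = a * X 0 * cpart x y M g + b * X 1 * dpart y M g := by
      rw [h3, h4, ← Finset.sum_sub_distrib, cpart, dpart, Finset.mul_sum, Finset.mul_sum,
        ← Finset.sum_add_distrib]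
      apply Finset.sum_congr rfl
      intro d _
      rw [← smul_sub, monomial_diff hx hy d, smul_add, mul_smul_comm, mul_smul_comm]
    have h6 : a * X 0 * (cSer x y g - cpart x y M g) ∈ J 2 k n :=
      J_antitone (by omega) ((J 2 k (2 * M - 2)).mul_mem_left (a * X 0)
        (cSer_sub_cpart hx2 hy2 g M))
    have h7 : b * X 1 * (dSer y g - dpart y M g) ∈ J 2 k n :=
      J_antitone (by omega) ((J 2 k (2 * M - 2)).mul_mem_left (b * X 1)
        (dSer_sub_dpart hy2 g M))
    have hexpr : ψ g - sq k g - (a * X 0 * cSer x y g + b * X 1 * dSer y g)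
        = (ψ g - ψ P) - (sq k g - sq k P)
          - (a * X 0 * (cSer x y g - cpart x y M g) + b * X 1 * (dSer y g - dpart y M g))
          + ((ψ P - sq k P) - (a * X 0 * cpart x y M g + b * X 1 * dpart y M g)) := by
      ring
    rw [hexpr, h5, sub_self, add_zero]
    exact sub_mem (sub_mem (J_antitone (by omega) h1) (J_antitone (by omega) h2))
      (add_mem h6 h7)
  have h0 := eq_zero_of_mem_J hmain
  have : ψ g - (sq k g + (a * X 0 * cSer x y g + b * X 1 * dSer y g)) = 0 := by
    rw [← h0]; ring
  exact sub_eq_zero.1 this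

lemma key_mem {x y a b : MvPowerSeries (Fin 2) k}
    (ψ : MvPowerSeries (Fin 2) k →ₐ[k] MvPowerSeries (Fin 2) k)
    (hψ0 : ψ (X 0) = x) (hψ1 : ψ (X 1) = y)
    (hψJ : ∀ n (g : MvPowerSeries (Fin 2) k), g ∈ J 2 k n → ψ g ∈ J 2 k n)
    (hx : x = X 0 ^ 2 + a * X 0) (hy : y = X 1 ^ 2 + b * X 1)
    (hx2 : x ∈ J 2 k 2) (hy2 : y ∈ J 2 k 2)
    (g : MvPowerSeries (Fin 2) k) :
    ψ g - sq k g ∈ Ideal.span {a * X 0, b * X 1} := by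
  rw [key_sub ψ hψ0 hψ1 hψJ hx hy hx2 hy2 g]
  rw [Ideal.mem_span_pair]
  exact ⟨cSer x y g, dSer y g, by ring⟩

/-! ### embedding two-variable series into three-variable series -/

noncomputable def restr (D : Fin 3 →₀ ℕ) : Fin 2 →₀ ℕ :=
  Finsupp.comapDomain (Fin.castSucc) D ((Fin.castSucc_injective 2).injOn)

lemma restr_apply (D : Fin 3 →₀ ℕ) (i : Fin 2) : restr D i = D (Fin.castSucc i) :=
  Finsupp.comapDomain_apply _ _ _ _

variable (k) in
noncomputable def emb (g : MvPowerSeries (Fin 2) k) : MvPowerSeries (Fin 3) k :=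
  fun D => if D 2 = 0 then coeff (restr D) g else 0

lemma coeff_emb (g : MvPowerSeries (Fin 2) k) (D : Fin 3 →₀ ℕ) :
    coeff D (emb k g) = if D 2 = 0 then coeff (restr D) g else 0 := rfl

lemma last_notin_range : (2 : Fin 3) ∉ Set.range (Fin.castSucc : Fin 2 → Fin 3) := by
  rintro ⟨i, hi⟩
  have := Fin.castSucc_lt_last i
  rw [hi] at this
  exact absurd this (by decide)

lemma mapDomain_apply2 (d : Fin 2 →₀ ℕ) :
    (Finsupp.mapDomain (Fin.castSucc : Fin 2 → Fin 3) d) 2 = 0 :=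
  Finsupp.mapDomain_notin_range _ _ last_notin_range

lemma restr_mapDomain (d : Fin 2 →₀ ℕ) :
    restr (Finsupp.mapDomain (Fin.castSucc : Fin 2 → Fin 3) d) = d := by
  ext i
  rw [restr_apply, Finsupp.mapDomain_apply (Fin.castSucc_injective 2)]

lemma mapDomain_restr {D : Fin 3 →₀ ℕ} (hD : D 2 = 0) :
    Finsupp.mapDomain (Fin.castSucc : Fin 2 → Fin 3) (restr D) = D := by
  ext j
  induction j using Fin.lastCases with
  | last =>
    rw [show Fin.last 2 = 2 from rfl, mapDomain_apply2, hD]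
  | cast i =>
    rw [Finsupp.mapDomain_apply (Fin.castSucc_injective 2), restr_apply]

lemma wdeg_mapDomain (d : Fin 2 →₀ ℕ) :
    wdeg (Finsupp.mapDomain (Fin.castSucc : Fin 2 → Fin 3) d) = wdeg d := by
  rw [wdeg, wdeg, Finsupp.sum_mapDomain_index (fun _ => rfl) (fun _ _ _ => rfl)]

lemma coeff_emb_mapDomain (g : MvPowerSeries (Fin 2) k) (d : Fin 2 →₀ ℕ) :
    coeff (Finsupp.mapDomain (Fin.castSucc : Fin 2 → Fin 3) d) (emb k g) = coeff d g := by
  rw [coeff_emb, if_pos (mapDomain_apply2 d), restr_mapDomain]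

lemma truncP_emb (n : ℕ) (g : MvPowerSeries (Fin 2) k) :
    truncP n (emb k g) = MvPolynomial.rename (Fin.castSucc : Fin 2 → Fin 3) (truncP n g) := by
  apply MvPolynomial.ext
  intro D
  by_cases hD : D 2 = 0
  · have hDm : D = Finsupp.mapDomain (Fin.castSucc : Fin 2 → Fin 3) (restr D) :=
      (mapDomain_restr hD).symm
    rw [coeff_truncP, hDm, MvPolynomial.coeff_rename_mapDomain _ (Fin.castSucc_injective 2),
      coeff_truncP, wdeg_mapDomain, coeff_emb_mapDomain]
  · rw [coeff_truncP, MvPolynomial.coeff_rename_eq_zero]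
    · rw [coeff_emb, if_neg hD, ite_self]
    · intro u hu
      exfalso
      apply hD
      rw [← hu, mapDomain_apply2]

/-- agreement of the two substitution maps on embedded series -/
lemma phi_emb
    (φ : MvPowerSeries (Fin 3) k →ₐ[k] MvPowerSeries (Fin 2) k)
    (ψ : MvPowerSeries (Fin 2) k →ₐ[k] MvPowerSeries (Fin 2) k)
    (hφJ : ∀ n (h : MvPowerSeries (Fin 3) k), h ∈ J 3 k n → φ h ∈ J 2 k n)
    (hψJ : ∀ n (g : MvPowerSeries (Fin 2) k), g ∈ J 2 k n → ψ g ∈ J 2 k n)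
    (h0 : φ (X 0) = ψ (X 0)) (h1 : φ (X 1) = ψ (X 1))
    (g : MvPowerSeries (Fin 2) k) : φ (emb k g) = ψ g := by
  have hmain : ∀ n, φ (emb k g) - ψ g ∈ J 2 k n := by
    intro n
    have e1 : φ (emb k g) - φ ((truncP n (emb k g) : MvPolynomial (Fin 3) k) :
        MvPowerSeries (Fin 3) k) ∈ J 2 k n := by
      rw [← map_sub]
      exact hφJ n _ (sub_truncP_mem_J n (emb k g))
    have e2 : ψ g - ψ ((truncP n g : MvPolynomial (Fin 2) k) : MvPowerSeries (Fin 2) k)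
        ∈ J 2 k n := by
      rw [← map_sub]
      exact hψJ n _ (sub_truncP_mem_J n g)
    have e3 : φ ((truncP n (emb k g) : MvPolynomial (Fin 3) k) : MvPowerSeries (Fin 3) k)
        = ψ ((truncP n g : MvPolynomial (Fin 2) k) : MvPowerSeries (Fin 2) k) := by
      rw [truncP_emb, algHom_coe_eq_aeval φ, algHom_coe_eq_aeval ψ, MvPolynomial.aeval_rename]
      have hfun : ((fun i => φ (X i)) ∘ (Fin.castSucc : Fin 2 → Fin 3)) = fun i => ψ (X i) := by
        funext i
        fin_cases i
        · exact h0
        · exact h1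
      rw [hfun]
    have : φ (emb k g) - ψ g = (φ (emb k g) - φ ((truncP n (emb k g) : MvPolynomial (Fin 3) k) :
        MvPowerSeries (Fin 3) k)) - (ψ g - ψ ((truncP n g : MvPolynomial (Fin 2) k) :
        MvPowerSeries (Fin 2) k)) := by
      rw [e3]; ring
    rw [this]
    exact sub_mem e1 e2
  have := eq_zero_of_mem_J hmain
  exact sub_eq_zero.1 this

end ArtinWild

open ArtinWild MvPowerSeries in

/-- (`k` of characteristic 2.)  Let `A, B ∈ k[[X,Y]]` be a system of
parameters with zero constant term; let `x, y ∈ k[[u,v]]` with zero constant term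
satisfy `x = u² + a·u`, `y = v² + b·v` where `a = A(x,y)`, `b = B(x,y)`, and set
`z = u·b + v·a`.  Substitution is encoded by (necessarily unique) adically continuous
`k`-algebra homomorphisms: `ψ : k[[X,Y]] → k[[u,v]]` with `ψ(X) = x`, `ψ(Y) = y`, and
`φ : k[[X,Y,Z]] → k[[u,v]]` with `φ(X) = x`, `φ(Y) = y`, `φ(Z) = z`, each mapping the
`n`-th power of the maximal ideal into the `n`-th power of `(u,v)`.  With
`T = range φ ⊆ k[[u,v]]`, the contraction `T ∩ (a, b)·k[[u,v]]` equals the ideal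
`(a, b, z)·T` of `T`.  Here `u = X 0`, `v = X 1` in `MvPowerSeries (Fin 2) k`. -/
theorem image_of_fixed_scheme_ideal
    {k : Type*} [Field k] [CharP k 2]
    (A B : MvPowerSeries (Fin 2) k)
    (hA0 : (MvPowerSeries.constantCoeff : MvPowerSeries (Fin 2) k →+* k) A = 0)
    (hB0 : (MvPowerSeries.constantCoeff : MvPowerSeries (Fin 2) k →+* k) B = 0)
    (hAB : (Ideal.span {A, B}).radical =
      Ideal.span {(MvPowerSeries.X 0 : MvPowerSeries (Fin 2) k), MvPowerSeries.X 1})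
    (x y a b z : MvPowerSeries (Fin 2) k)
    (hx0 : (MvPowerSeries.constantCoeff : MvPowerSeries (Fin 2) k →+* k) x = 0)
    (hy0 : (MvPowerSeries.constantCoeff : MvPowerSeries (Fin 2) k →+* k) y = 0)
    (ψ : MvPowerSeries (Fin 2) k →ₐ[k] MvPowerSeries (Fin 2) k)
    (hψ0 : ψ (MvPowerSeries.X 0) = x) (hψ1 : ψ (MvPowerSeries.X 1) = y)
    (hψcont : ∀ n : ℕ, Ideal.map ψ
        ((Ideal.span {(MvPowerSeries.X 0 : MvPowerSeries (Fin 2) k), MvPowerSeries.X 1}) ^ n) ≤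
      (Ideal.span {(MvPowerSeries.X 0 : MvPowerSeries (Fin 2) k), MvPowerSeries.X 1}) ^ n)
    (ha : a = ψ A) (hb : b = ψ B)
    (hx : x = MvPowerSeries.X 0 ^ 2 + a * MvPowerSeries.X 0)
    (hy : y = MvPowerSeries.X 1 ^ 2 + b * MvPowerSeries.X 1)
    (hz : z = MvPowerSeries.X 0 * b + MvPowerSeries.X 1 * a)
    (φ : MvPowerSeries (Fin 3) k →ₐ[k] MvPowerSeries (Fin 2) k)
    (hφ0 : φ (MvPowerSeries.X 0) = x) (hφ1 : φ (MvPowerSeries.X 1) = y)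
    (hφ2 : φ (MvPowerSeries.X 2) = z)
    (hφcont : ∀ n : ℕ, Ideal.map φ
        ((Ideal.span {(MvPowerSeries.X 0 : MvPowerSeries (Fin 3) k), MvPowerSeries.X 1,
          MvPowerSeries.X 2}) ^ n) ≤
      (Ideal.span {(MvPowerSeries.X 0 : MvPowerSeries (Fin 2) k), MvPowerSeries.X 1}) ^ n) :
    Ideal.comap φ.range.val (Ideal.span {a, b}) =
      Ideal.span {t : φ.range | (t : MvPowerSeries (Fin 2) k) = a ∨
        (t : MvPowerSeries (Fin 2) k) = b ∨ (t : MvPowerSeries (Fin 2) k) = z} := by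
  classical
  -- continuity in the order filtration
  have hψJ : ∀ n (g : MvPowerSeries (Fin 2) k), g ∈ J 2 k n → ψ g ∈ J 2 k n := by
    intro n g hg
    have h1 : g ∈ (Ideal.span {(MvPowerSeries.X 0 : MvPowerSeries (Fin 2) k), X 1}) ^ n := by
      rw [← span_range_eq2 k]
      exact J_le_span_pow n hg
    have h3 := hψcont n (Ideal.mem_map_of_mem ψ h1)
    apply span_pow_le_J n
    rwa [span_range_eq2 k]
  have hφJ : ∀ n (g : MvPowerSeries (Fin 3) k), g ∈ J 3 k n → φ g ∈ J 2 k n := by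
    intro n g hg
    have h1 : g ∈ (Ideal.span {(MvPowerSeries.X 0 : MvPowerSeries (Fin 3) k), X 1, X 2}) ^ n := by
      rw [← span_range_eq3 k]
      exact J_le_span_pow n hg
    have h3 := hφcont n (Ideal.mem_map_of_mem φ h1)
    apply span_pow_le_J n
    rwa [span_range_eq2 k]
  -- basic order facts
  have ha1 : a ∈ J 2 k 1 := ha ▸ hψJ 1 A (constantCoeff_mem_J1 hA0)
  have hb1 : b ∈ J 2 k 1 := hb ▸ hψJ 1 B (constantCoeff_mem_J1 hB0)
  have hx2 : x ∈ J 2 k 2 := by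
    rw [hx]
    exact add_mem (by simpa using J_pow (X_mem_J1 0) 2) (J_mul ha1 (X_mem_J1 0))
  have hy2 : y ∈ J 2 k 2 := by
    rw [hy]
    exact add_mem (by simpa using J_pow (X_mem_J1 1) 2) (J_mul hb1 (X_mem_J1 1))
  -- the key lemma and agreement of φ and ψ
  have hK : ∀ g, ψ g - sq k g ∈ Ideal.span {a * X 0, b * X 1} :=
    key_mem ψ hψ0 hψ1 hψJ hx hy hx2 hy2
  have hAg : ∀ g, φ (emb k g) = ψ g :=
    phi_emb φ ψ hφJ hψJ (by rw [hφ0, hψ0]) (by rw [hφ1, hψ1])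
  -- Nakayama: the ideal (a·u, b·v) is contained in (sq A·u, sq B·v)
  have hJac : Ideal.span {(X 0 : MvPowerSeries (Fin 2) k), X 1} ≤
      (⊥ : Ideal (MvPowerSeries (Fin 2) k)).jacobson := by
    have hmem : ∀ f : MvPowerSeries (Fin 2) k, constantCoeff f = 0 →
        f ∈ (⊥ : Ideal (MvPowerSeries (Fin 2) k)).jacobson := by
      intro f hf
      rw [Ideal.mem_jacobson_bot]
      intro w
      rw [MvPowerSeries.isUnit_iff_constantCoeff]
      rw [map_add, map_mul, hf, zero_mul, map_one, zero_add]
      exact isUnit_one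
    rw [Ideal.span_le]
    intro f hf
    rcases hf with h | h
    · rw [h]; exact hmem _ (constantCoeff_X 0)
    · rw [h]; exact hmem _ (constantCoeff_X 1)
  have hanak : a - sq k A ∈ Ideal.span {a * X 0, b * X 1} := by
    have := hK A
    rwa [← ha] at this
  have hbnak : b - sq k B ∈ Ideal.span {a * X 0, b * X 1} := by
    have := hK B
    rwa [← hb] at this
  have step1 : Ideal.span {a * X 0, b * X 1} ≤
      Ideal.span {sq k A * X 0, sq k B * X 1} ⊔
        Ideal.span {(X 0 : MvPowerSeries (Fin 2) k), X 1} • Ideal.span {a * X 0, b * X 1} := by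
    rw [Ideal.span_le]
    intro f hf
    rcases hf with h | h
    · rw [h]
      have hm1 : sq k A * X 0 ∈ Ideal.span {sq k A * X 0, sq k B * X 1} :=
        Ideal.subset_span (Or.inl rfl)
      have hm2 : (X 0 : MvPowerSeries (Fin 2) k) ∈
          Ideal.span {(X 0 : MvPowerSeries (Fin 2) k), X 1} := Ideal.subset_span (Or.inl rfl)
      have h1 := Ideal.mem_sup_left (T := Ideal.span {(X 0 : MvPowerSeries (Fin 2) k), X 1} •
          Ideal.span {a * X 0, b * X 1}) hm1
      have h2 := Ideal.mem_sup_right (S := Ideal.span {sq k A * X 0, sq k B * X 1})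
        (Submodule.smul_mem_smul hm2 hanak)
      have h3 := add_mem h1 h2
      have heq : sq k A * X 0 + (X 0 : MvPowerSeries (Fin 2) k) • (a - sq k A) = a * X 0 := by
        rw [smul_eq_mul]; ring
      exact heq ▸ h3
    · rw [h]
      have hm1 : sq k B * X 1 ∈ Ideal.span {sq k A * X 0, sq k B * X 1} :=
        Ideal.subset_span (Or.inr rfl)
      have hm2 : (X 1 : MvPowerSeries (Fin 2) k) ∈
          Ideal.span {(X 0 : MvPowerSeries (Fin 2) k), X 1} := Ideal.subset_span (Or.inr rfl)
      have h1 := Ideal.mem_sup_left (T := Ideal.span {(X 0 : MvPowerSeries (Fin 2) k), X 1} •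
          Ideal.span {a * X 0, b * X 1}) hm1
      have h2 := Ideal.mem_sup_right (S := Ideal.span {sq k A * X 0, sq k B * X 1})
        (Submodule.smul_mem_smul hm2 hbnak)
      have h3 := add_mem h1 h2
      have heq : sq k B * X 1 + (X 1 : MvPowerSeries (Fin 2) k) • (b - sq k B) = b * X 1 := by
        rw [smul_eq_mul]; ring
      exact heq ▸ h3
  have step2 : Ideal.span {a * X 0, b * X 1} ≤ Ideal.span {sq k A * X 0, sq k B * X 1} :=
    Submodule.le_of_le_smul_of_le_jacobson_bot (Submodule.fg_span (Set.toFinite _)) hJac step1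
  have hIVle : Ideal.span {sq k A * X 0, sq k B * X 1} ≤ Ideal.span {sq k A, sq k B} := by
    rw [Ideal.span_le]
    intro f hf
    rcases hf with h | h
    · rw [h]
      exact Ideal.mul_mem_right _ _ (Ideal.subset_span (Or.inl rfl))
    · rw [h]
      exact Ideal.mul_mem_right _ _ (Ideal.subset_span (Or.inr rfl))
  have hIU_IS : Ideal.span {a * X 0, b * X 1} ≤ Ideal.span {sq k A, sq k B} :=
    step2.trans hIVle
  have hIA_IS : Ideal.span {a, b} ≤ Ideal.span {sq k A, sq k B} := by
    rw [Ideal.span_le]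
    intro f hf
    rcases hf with h | h
    · rw [h]
      have h3 := add_mem (Ideal.subset_span (Or.inl rfl) : sq k A ∈ Ideal.span {sq k A, sq k B})
        (hIU_IS hanak)
      have heq : sq k A + (a - sq k A) = a := by ring
      exact heq ▸ h3
    · rw [h]
      have h3 := add_mem (Ideal.subset_span (Or.inr rfl) : sq k B ∈ Ideal.span {sq k A, sq k B})
        (hIU_IS hbnak)
      have heq : sq k B + (b - sq k B) = b := by ring
      exact heq ▸ h3
  -- memberships in the image subalgebra
  have hzmem : z ∈ Ideal.span {a, b} := by
    rw [hz, Ideal.mem_span_pair]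
    exact ⟨X 1, X 0, by ring⟩
  have haT : a ∈ φ.range := ⟨emb k A, (hAg A).trans ha.symm⟩
  have hbT : b ∈ φ.range := ⟨emb k B, (hAg B).trans hb.symm⟩
  have hzT : z ∈ φ.range := ⟨X 2, hφ2⟩
  apply le_antisymm
  · -- hard direction
    intro t ht
    rw [Ideal.mem_comap] at ht
    have htval : (t : MvPowerSeries (Fin 2) k) ∈ Ideal.span {a, b} := ht
    obtain ⟨F, hF⟩ := (AlgHom.mem_range φ).1 t.2
    -- split off the Z-free part
    set G : MvPowerSeries (Fin 2) k :=
      fun d => coeff (Finsupp.mapDomain (Fin.castSucc : Fin 2 → Fin 3) d) F with hG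
    have hembG : ∀ D : Fin 3 →₀ ℕ, D 2 = 0 → coeff D (emb k G) = coeff D F := by
      intro D hD
      rw [coeff_emb, if_pos hD]
      have : coeff (restr D) G = coeff (Finsupp.mapDomain (Fin.castSucc : Fin 2 → Fin 3)
        (restr D)) F := rfl
      rw [this, mapDomain_restr hD]
    have hdvd : (X 2 : MvPowerSeries (Fin 3) k) ∣ (F - emb k G) := by
      rw [X_dvd_iff]
      intro m hm
      rw [map_sub, hembG m hm, sub_self]
    obtain ⟨F₁, hF₁⟩ := hdvd
    have hFsplit : F = emb k G + X 2 * F₁ := by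
      rw [← hF₁]; ring
    have hval : (t : MvPowerSeries (Fin 2) k) = ψ G + z * φ F₁ := by
      rw [← hF, hFsplit, map_add, map_mul, hφ2, hAg G]
    -- the Z-free part lies in (a,b) as well
    have hpI : ψ G ∈ Ideal.span {a, b} := by
      have : ψ G = (t : MvPowerSeries (Fin 2) k) - z * φ F₁ := by rw [hval]; ring
      rw [this]
      exact sub_mem htval (Ideal.mul_mem_right _ _ hzmem)
    have hpIS : ψ G ∈ Ideal.span {sq k A, sq k B} := hIA_IS hpI
    obtain ⟨α, β, hαβ⟩ := Ideal.mem_span_pair.1 hpIS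
    obtain ⟨γ, δ, hγδ⟩ := Ideal.mem_span_pair.1 (step2 (hK G))
    -- even parts
    have hev1 : ev k (ψ G) = sq k (A * Halve k α + B * Halve k β) := by
      have hp' : ψ G = sq k A * α + sq k B * β := by rw [← hαβ]; ring
      rw [hp', ev_add, ev_sq_mul, ev_sq_mul]
      have e1 : ev k α = sq k (Halve k α) := rfl
      have e2 : ev k β = sq k (Halve k β) := rfl
      rw [e1, e2, ← sq_mul, ← sq_mul, ← sq_add]
    have hev2 : ev k (ψ G - sq k G) =
        sq k (A * Halve k ((X 0 : MvPowerSeries (Fin 2) k) * γ)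
          + B * Halve k ((X 1 : MvPowerSeries (Fin 2) k) * δ)) := by
      have hq' : ψ G - sq k G = sq k A * ((X 0 : MvPowerSeries (Fin 2) k) * γ)
          + sq k B * ((X 1 : MvPowerSeries (Fin 2) k) * δ) := by rw [← hγδ]; ring
      rw [hq', ev_add, ev_sq_mul, ev_sq_mul]
      have e1 : ev k ((X 0 : MvPowerSeries (Fin 2) k) * γ)
          = sq k (Halve k ((X 0 : MvPowerSeries (Fin 2) k) * γ)) := rfl
      have e2 : ev k ((X 1 : MvPowerSeries (Fin 2) k) * δ)
          = sq k (Halve k ((X 1 : MvPowerSeries (Fin 2) k) * δ)) := rfl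
      rw [e1, e2, ← sq_mul, ← sq_mul, ← sq_add]
    have hsqG : sq k G = sq k ((A * Halve k α + B * Halve k β)
        - (A * Halve k ((X 0 : MvPowerSeries (Fin 2) k) * γ)
          + B * Halve k ((X 1 : MvPowerSeries (Fin 2) k) * δ))) := by
      have h9 : ev k (sq k G) = ev k (ψ G) - ev k (ψ G - sq k G) := by
        rw [← ev_sub]
        congr 1
        ring
      rw [ev_sq] at h9
      rw [h9, hev1, hev2, ← sq_sub]
    have hGsplit : G = A * (Halve k α - Halve k ((X 0 : MvPowerSeries (Fin 2) k) * γ))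
        + B * (Halve k β - Halve k ((X 1 : MvPowerSeries (Fin 2) k) * δ)) := by
      apply sq_injective
      rw [hsqG]
      congr 1
      ring
    -- conclude
    set c1 := Halve k α - Halve k ((X 0 : MvPowerSeries (Fin 2) k) * γ) with hc1
    set c2 := Halve k β - Halve k ((X 1 : MvPowerSeries (Fin 2) k) * δ) with hc2
    have hfinal : (t : MvPowerSeries (Fin 2) k) = ψ c1 * a + ψ c2 * b + φ F₁ * z := by
      rw [hval, hGsplit, map_add, map_mul, map_mul, ← ha, ← hb]
      ring
    have hs1T : ψ c1 ∈ φ.range := ⟨emb k c1, hAg c1⟩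
    have hs2T : ψ c2 ∈ φ.range := ⟨emb k c2, hAg c2⟩
    have hs3T : φ F₁ ∈ φ.range := ⟨F₁, rfl⟩
    have hteq : t = (⟨ψ c1, hs1T⟩ : φ.range) * ⟨a, haT⟩ + ⟨ψ c2, hs2T⟩ * ⟨b, hbT⟩
        + ⟨φ F₁, hs3T⟩ * ⟨z, hzT⟩ := by
      apply Subtype.ext
      push_cast
      exact hfinal
    rw [hteq]
    refine add_mem (add_mem ?_ ?_) ?_
    · exact Ideal.mul_mem_left _ _ (Ideal.subset_span (Or.inl rfl))
    · exact Ideal.mul_mem_left _ _ (Ideal.subset_span (Or.inr (Or.inl rfl)))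
    · exact Ideal.mul_mem_left _ _ (Ideal.subset_span (Or.inr (Or.inr rfl)))
  · -- easy direction
    rw [Ideal.span_le]
    intro t ht
    simp only [Set.mem_setOf_eq] at ht
    rw [SetLike.mem_coe, Ideal.mem_comap]
    rcases ht with h | h | h
    · show (t : MvPowerSeries (Fin 2) k) ∈ Ideal.span {a, b}
      rw [h]
      exact Ideal.subset_span (Or.inl rfl)
    · show (t : MvPowerSeries (Fin 2) k) ∈ Ideal.span {a, b}
      rw [h]
      exact Ideal.subset_span (Or.inr rfl)
    · show (t : MvPowerSeries (Fin 2) k) ∈ Ideal.span {a, b}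
      rw [h]
      exact hzmem
end
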